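/- Let Ξ: A → U be a random function between finite nonempty sets. Then Ξ separates A if and only if for every ε > 0 there exists k_ε such that for all k ≥ k_ε there is a random function Γ: U^k → A, independent of Ξ^(k), with P[γ(ξ_a^(k)) = a] > 1 − ε for every a ∈ A. -/

import Mathlib

open Finset


section aux
variable {U : Type*} [Fintype U]

private lemma master {k : ℕ} (f : Fin k → U → ℝ) :
    ∑ v : Fin k → U, ∏ i, f i (v i) = ∏ i, ∑ u, f i u :=
  (Fintype.prod_sum f).symm

private lemma marg1 {k : ℕ} (q : U → ℝ) (hq1 : ∑ u, q u = 1) (i : Fin k) (H : U → ℝ) :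
    ∑ v : Fin k → U, (∏ l, q (v l)) * H (v i) = ∑ u, q u * H u := by
  have key : ∀ v : Fin k → U, (∏ l, q (v l)) * H (v i)
      = ∏ l, (q (v l) * (if l = i then H (v l) else 1)) := by
    intro v
    rw [Finset.prod_mul_distrib]
    congr 1
    simp [Finset.prod_ite_eq' Finset.univ i (fun l => H (v l))]
  simp_rw [key]
  rw [master fun l u => q u * (if l = i then H u else 1)]
  have : ∀ l : Fin k, (∑ u, q u * (if l = i then H u else 1))
      = if l = i then ∑ u, q u * H u else 1 := by
    intro l
    by_cases h : l = i <;> simp [h, hq1]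
  simp_rw [this]
  simp [Finset.prod_ite_eq' Finset.univ i (fun _ => ∑ u, q u * H u)]

private lemma marg2 {k : ℕ} (q : U → ℝ) (hq1 : ∑ u, q u = 1) {i j : Fin k} (hij : i ≠ j)
    (F G : U → ℝ) :
    ∑ v : Fin k → U, (∏ l, q (v l)) * (F (v i) * G (v j))
      = (∑ u, q u * F u) * (∑ u, q u * G u) := by
  have key : ∀ v : Fin k → U, (∏ l, q (v l)) * (F (v i) * G (v j))
      = ∏ l, (q (v l) * ((if l = i then F (v l) else 1) * (if l = j then G (v l) else 1))) := by
    intro v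
    rw [Finset.prod_mul_distrib, Finset.prod_mul_distrib]
    congr 1
    congr 1
    · simp [Finset.prod_ite_eq' Finset.univ i (fun l => F (v l))]
    · simp [Finset.prod_ite_eq' Finset.univ j (fun l => G (v l))]
  simp_rw [key]
  rw [master fun l u => q u * ((if l = i then F u else 1) * (if l = j then G u else 1))]
  have : ∀ l : Fin k, (∑ u, q u * ((if l = i then F u else 1) * (if l = j then G u else 1)))
      = (if l = i then ∑ u, q u * F u else 1) * (if l = j then ∑ u, q u * G u else 1) := by
    intro l
    by_cases h1 : l = i
    · subst h1
      simp [hij]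
    · by_cases h2 : l = j <;> simp [h1, h2, hq1, Ne.symm hij]
  simp_rw [this]
  rw [Finset.prod_mul_distrib]
  congr 1
  · simp [Finset.prod_ite_eq' Finset.univ i (fun _ => ∑ u, q u * F u)]
  · simp [Finset.prod_ite_eq' Finset.univ j (fun _ => ∑ u, q u * G u)]

private lemma var_bound {k : ℕ} (q : U → ℝ) (hq0 : ∀ u, 0 ≤ q u) (hq1 : ∑ u, q u = 1)
    (F : U → ℝ) (hF : ∀ u, F u ^ 2 ≤ 1) (hmean : ∑ u, q u * F u = 0) :
    ∑ v : Fin k → U, (∏ l, q (v l)) * (∑ i, F (v i)) ^ 2 ≤ k := by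
  have expand : ∀ v : Fin k → U, (∏ l, q (v l)) * (∑ i, F (v i)) ^ 2
      = ∑ i : Fin k, ∑ j : Fin k, (∏ l, q (v l)) * (F (v i) * F (v j)) := by
    intro v
    rw [sq, Finset.sum_mul_sum]
    rw [Finset.mul_sum]
    exact Finset.sum_congr rfl fun i _ => by rw [Finset.mul_sum]
  simp_rw [expand]
  have E : ∀ i j : Fin k, (∑ v : Fin k → U, (∏ l, q (v l)) * (F (v i) * F (v j)))
      ≤ if i = j then 1 else 0 := by
    intro i j
    by_cases h : i = j
    · subst h
      rw [if_pos rfl, marg1 q hq1 i (fun u => F u * F u)]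
      calc ∑ u, q u * (F u * F u) ≤ ∑ u, q u * 1 := by
            refine Finset.sum_le_sum fun u _ => ?_
            have := hF u
            rw [sq] at this
            exact mul_le_mul_of_nonneg_left this (hq0 u)
        _ = 1 := by simpa using hq1
    · rw [if_neg h, marg2 q hq1 h F F, hmean, mul_zero]
  calc ∑ v : Fin k → U, ∑ i : Fin k, ∑ j : Fin k, (∏ l, q (v l)) * (F (v i) * F (v j))
      = ∑ i : Fin k, ∑ j : Fin k, ∑ v : Fin k → U, (∏ l, q (v l)) * (F (v i) * F (v j)) := by
        rw [Finset.sum_comm]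
        exact Finset.sum_congr rfl fun i _ => Finset.sum_comm
    _ ≤ ∑ i : Fin k, ∑ j : Fin k, (if i = j then (1:ℝ) else 0) :=
        Finset.sum_le_sum fun i _ => Finset.sum_le_sum fun j _ => E i j
    _ = k := by simp

end aux

theorem stmt2 {A U : Type*} [Fintype A] [Fintype U] [Nonempty A] [Nonempty U]
    (p : A → U → ℝ) (hp0 : ∀ a u, 0 ≤ p a u) (hp1 : ∀ a, ∑ u, p a u = 1) :
    (∀ a b : A, a ≠ b → 0 < ∑ u, |p a u - p b u|) ↔
      (∀ ε : ℝ, 0 < ε → ∃ kε : ℕ, ∀ k : ℕ, kε ≤ k →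
        ∃ g : (Fin k → U) → A → ℝ,
          (∀ v x, 0 ≤ g v x) ∧ (∀ v, ∑ x, g v x = 1) ∧
          ∀ a, 1 - ε < ∑ v : Fin k → U, (∏ i, p a (v i)) * g v a) := by
  classical
  have hw1 : ∀ (k : ℕ) (c : A), ∑ v : Fin k → U, ∏ i, p c (v i) = 1 := by
    intro k c
    rw [master fun _ u => p c u]
    simp [hp1 c]
  have hw0 : ∀ (k : ℕ) (c : A) (v : Fin k → U), 0 ≤ ∏ i, p c (v i) :=
    fun k c v => Finset.prod_nonneg fun i _ => hp0 c (v i)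
  constructor
  · intro hsep ε hε
    by_cases hA : ∀ a b : A, a = b
    · refine ⟨0, fun k _ => ⟨fun v x => if x = Classical.arbitrary A then 1 else 0,
        fun v x => by dsimp only; split_ifs <;> norm_num,
        fun v => by dsimp only; simp [Finset.sum_ite_eq'], fun a => ?_⟩⟩
      simp only [if_pos (hA a (Classical.arbitrary A)), mul_one, hw1 k a]
      linarith
    · push_neg at hA
      obtain ⟨a0, b0, hab0⟩ := hA
      set s : Finset (A × A) := Finset.univ.filter (fun pr => pr.1 ≠ pr.2) with hs
      have hsne : s.Nonempty := ⟨(a0, b0), by simp [hs, hab0]⟩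
      set δ : ℝ := s.inf' hsne (fun pr => ∑ u, |p pr.1 u - p pr.2 u|) with hδdef
      have hδpos : 0 < δ := by
        rw [hδdef, Finset.lt_inf'_iff]
        intro pr hpr
        exact hsep pr.1 pr.2 (by simpa [hs] using hpr)
      have hδle : ∀ a b : A, a ≠ b → δ ≤ ∑ u, |p a u - p b u| := by
        intro a b h
        exact Finset.inf'_le _ (show (a, b) ∈ s by simp [hs, h])
      set m : ℝ := (Fintype.card U : ℝ) with hm
      have hm0 : 0 < m := by
        rw [hm]; exact_mod_cast Fintype.card_pos
      obtain ⟨K, hK⟩ := exists_nat_gt (4 * m ^ 3 / (δ ^ 2 * ε))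
      refine ⟨max 1 K, fun k hk => ?_⟩
      have hk1 : 1 ≤ k := le_trans (le_max_left _ _) hk
      have hkpos : (0:ℝ) < k := by exact_mod_cast lt_of_lt_of_le one_pos hk1
      have hkK : 4 * m ^ 3 / (δ ^ 2 * ε) < (k:ℝ) :=
        lt_of_lt_of_le hK (by exact_mod_cast le_trans (le_max_right 1 K) hk)
      set t : ℝ := k * δ / (2 * m) with ht
      have ht0 : 0 < t := div_pos (mul_pos hkpos hδpos) (by linarith)
      have herr : m * k / t ^ 2 < ε := by
        have h4 : 4 * m ^ 3 < (k:ℝ) * (δ ^ 2 * ε) := (div_lt_iff₀ (by positivity)).mp hkK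
        rw [div_lt_iff₀ (by positivity)]
        rw [ht]
        have heq : ε * (↑k * δ / (2 * m)) ^ 2 = ε * (k:ℝ)^2 * δ^2 / (4 * m^2) := by
          field_simp; ring
        rw [heq, lt_div_iff₀ (by positivity)]
        nlinarith [mul_lt_mul_of_pos_right h4 hkpos]
      set N : (Fin k → U) → U → ℝ := fun v u => ∑ i, if v i = u then (1:ℝ) else 0 with hNdef
      set D : (Fin k → U) → A → ℝ := fun v b => ∑ u, |N v u - k * p b u| with hDdef
      have hch : ∀ v : Fin k → U, ∃ b : A, ∀ c : A, D v b ≤ D v c := by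
        intro v
        obtain ⟨b, -, hb⟩ := Finset.exists_min_image Finset.univ (D v)
          ⟨Classical.arbitrary A, Finset.mem_univ _⟩
        exact ⟨b, fun c => hb c (Finset.mem_univ c)⟩
      refine ⟨fun v x => if x = (hch v).choose then 1 else 0,
        fun v x => by dsimp only; split_ifs <;> norm_num,
        fun v => by dsimp only; simp [Finset.sum_ite_eq'], fun a => ?_⟩
      simp only
      set G : Finset (Fin k → U) :=
        Finset.univ.filter (fun v => ∀ u, |N v u - k * p a u| < t) with hG
      -- on good set the decoder outputs a
      have hclaim : ∀ v ∈ G, (hch v).choose = a := by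
        intro v hv
        rw [hG, Finset.mem_filter] at hv
        have hvu := hv.2
        have hDa : D v a < k * δ / 2 := by
          have h1 : D v a < ∑ _u : U, t :=
            Finset.sum_lt_sum_of_nonempty Finset.univ_nonempty (fun u _ => hvu u)
          have h2 : ∑ _u : U, t = m * t := by
            rw [Finset.sum_const, Finset.card_univ, nsmul_eq_mul, hm]
          have h3 : m * t = k * δ / 2 := by
            rw [ht]; field_simp
          linarith
        have hkey : ∀ b : A, b ≠ a → D v a < D v b := by
          intro b hb
          have h1 : (k:ℝ) * δ ≤ D v a + D v b := by
            have h2 : (k:ℝ) * δ ≤ k * ∑ u, |p a u - p b u| :=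
              mul_le_mul_of_nonneg_left (hδle a b (Ne.symm hb)) hkpos.le
            have h3 : (k:ℝ) * ∑ u, |p a u - p b u| = ∑ u, |k * p a u - k * p b u| := by
              rw [Finset.mul_sum]
              refine Finset.sum_congr rfl fun u _ => ?_
              calc (k:ℝ) * |p a u - p b u| = |(k:ℝ)| * |p a u - p b u| := by
                    rw [abs_of_nonneg hkpos.le]
                _ = |(k:ℝ) * (p a u - p b u)| := (abs_mul _ _).symm
                _ = |(k:ℝ) * p a u - (k:ℝ) * p b u| := by ring_nf
            have h4 : ∑ u, |(k:ℝ) * p a u - k * p b u|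
                ≤ ∑ u, (|N v u - k * p a u| + |N v u - k * p b u|) := by
              refine Finset.sum_le_sum fun u _ => ?_
              calc |(k:ℝ) * p a u - k * p b u|
                  ≤ |(k:ℝ) * p a u - N v u| + |N v u - k * p b u| := abs_sub_le _ _ _
                _ = |N v u - k * p a u| + |N v u - k * p b u| := by rw [abs_sub_comm]
            have h5 : ∑ u, (|N v u - k * p a u| + |N v u - k * p b u|) = D v a + D v b := by
              rw [hDdef, ← Finset.sum_add_distrib]
            linarith
          linarith
        by_contra hne
        exact absurd ((hch v).choose_spec a) (not_le.mpr (hkey _ hne))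
      -- probability bounds
      have hple : ∀ (c : A) (u : U), p c u ≤ 1 := fun c u => by
        calc p c u ≤ ∑ u', p c u' :=
              Finset.single_le_sum (fun u' _ => hp0 c u') (Finset.mem_univ u)
          _ = 1 := hp1 c
      have hcheb : ∀ u : U,
          ∑ v : Fin k → U, (if t ≤ |N v u - k * p a u| then (∏ i, p a (v i)) else 0)
            ≤ k / t ^ 2 := by
        intro u
        set F : U → ℝ := fun u' => (if u' = u then (1:ℝ) else 0) - p a u with hFdef
        have hsum : ∀ v : Fin k → U, N v u - k * p a u = ∑ i, F (v i) := by
          intro v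
          rw [hNdef]
          simp only [hFdef]
          rw [Finset.sum_sub_distrib, Finset.sum_const, Finset.card_univ, Fintype.card_fin,
            nsmul_eq_mul]
        have hF2 : ∀ u', F u' ^ 2 ≤ 1 := by
          intro u'
          rw [hFdef]
          simp only
          have := hp0 a u
          have := hple a u
          split_ifs <;> nlinarith
        have hmean : ∑ u', p a u' * F u' = 0 := by
          simp only [hFdef, mul_sub, mul_ite, mul_one, mul_zero]
          rw [Finset.sum_sub_distrib, Finset.sum_ite_eq' Finset.univ u (fun u' => p a u'),
            ← Finset.sum_mul, hp1 a]
          simp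
        have hvar := var_bound (k := k) (p a) (hp0 a) (hp1 a) F hF2 hmean
        calc ∑ v : Fin k → U, (if t ≤ |N v u - k * p a u| then (∏ i, p a (v i)) else 0)
            ≤ ∑ v : Fin k → U, (∏ i, p a (v i)) * ((∑ i, F (v i)) ^ 2 / t ^ 2) := by
              refine Finset.sum_le_sum fun v _ => ?_
              split_ifs with h
              · have h2 : t ^ 2 ≤ (∑ i, F (v i)) ^ 2 := by
                  rw [← hsum v]
                  calc t ^ 2 ≤ |N v u - k * p a u| ^ 2 := by
                        exact pow_le_pow_left₀ ht0.le h 2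
                    _ = (N v u - k * p a u) ^ 2 := sq_abs _
                calc (∏ i, p a (v i)) = (∏ i, p a (v i)) * 1 := (mul_one _).symm
                  _ ≤ (∏ i, p a (v i)) * ((∑ i, F (v i)) ^ 2 / t ^ 2) :=
                    mul_le_mul_of_nonneg_left ((one_le_div (by positivity)).mpr h2)
                      (hw0 k a v)
              · exact mul_nonneg (hw0 k a v) (div_nonneg (sq_nonneg _) (sq_nonneg _))
          _ = (∑ v : Fin k → U, (∏ i, p a (v i)) * (∑ i, F (v i)) ^ 2) / t ^ 2 := by
              rw [Finset.sum_div]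
              exact Finset.sum_congr rfl fun v _ => (mul_div_assoc _ _ _).symm
          _ ≤ k / t ^ 2 := by
              gcongr
      have hBad : ∑ v ∈ Finset.univ.filter (fun v => ¬ ∀ u, |N v u - k * p a u| < t),
          (∏ i, p a (v i)) ≤ m * k / t ^ 2 := by
        calc ∑ v ∈ Finset.univ.filter (fun v => ¬ ∀ u, |N v u - k * p a u| < t),
              (∏ i, p a (v i))
            ≤ ∑ v ∈ Finset.univ.filter (fun v => ¬ ∀ u, |N v u - k * p a u| < t),
              ∑ u : U, (if t ≤ |N v u - k * p a u| then (∏ i, p a (v i)) else 0) := by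
              refine Finset.sum_le_sum fun v hv => ?_
              rw [Finset.mem_filter] at hv
              have hv2 := hv.2
              push_neg at hv2
              obtain ⟨u0, hu0⟩ := hv2
              calc (∏ i, p a (v i))
                  = (if t ≤ |N v u0 - k * p a u0| then (∏ i, p a (v i)) else 0) :=
                    (if_pos hu0).symm
                _ ≤ ∑ u : U, (if t ≤ |N v u - k * p a u| then (∏ i, p a (v i)) else 0) :=
                    Finset.single_le_sum
                      (f := fun u => if t ≤ |N v u - k * p a u| then (∏ i, p a (v i)) else 0)
                      (fun u _ => by split_ifs; exacts [hw0 k a v, le_rfl])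
                      (Finset.mem_univ u0)
          _ ≤ ∑ v : Fin k → U,
              ∑ u : U, (if t ≤ |N v u - k * p a u| then (∏ i, p a (v i)) else 0) :=
              Finset.sum_le_sum_of_subset_of_nonneg (Finset.filter_subset _ _)
                (fun v _ _ => Finset.sum_nonneg fun u _ => by
                  split_ifs; exacts [hw0 k a v, le_rfl])
          _ = ∑ u : U,
              ∑ v : Fin k → U, (if t ≤ |N v u - k * p a u| then (∏ i, p a (v i)) else 0) :=
              Finset.sum_comm
          _ ≤ ∑ _u : U, ((k:ℝ) / t ^ 2) := Finset.sum_le_sum fun u _ => hcheb u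
          _ = m * ((k:ℝ) / t ^ 2) := by
              rw [Finset.sum_const, Finset.card_univ, nsmul_eq_mul, hm]
          _ = m * k / t ^ 2 := (mul_div_assoc _ _ _).symm
      have hsplit : (∑ v ∈ G, ∏ i, p a (v i))
          + ∑ v ∈ Finset.univ.filter (fun v => ¬ ∀ u, |N v u - k * p a u| < t),
            (∏ i, p a (v i)) = 1 := by
        rw [hG, Finset.sum_filter_add_sum_filter_not]
        exact hw1 k a
      have hGa : (∑ v ∈ G, ∏ i, p a (v i))
          ≤ ∑ v : Fin k → U, (∏ i, p a (v i)) * (if a = (hch v).choose then 1 else 0) := by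
        calc (∑ v ∈ G, ∏ i, p a (v i))
            = ∑ v ∈ G, (∏ i, p a (v i)) * (if a = (hch v).choose then 1 else 0) :=
              Finset.sum_congr rfl fun v hv => by
                rw [if_pos (hclaim v hv).symm, mul_one]
          _ ≤ ∑ v : Fin k → U, (∏ i, p a (v i)) * (if a = (hch v).choose then 1 else 0) :=
              Finset.sum_le_sum_of_subset_of_nonneg (Finset.subset_univ _)
                (fun v _ _ => by
                  split_ifs
                  · rw [mul_one]; exact hw0 k a v
                  · rw [mul_zero])
      linarith
  · intro h a b hab
    by_contra hle
    push_neg at hle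
    have h0 : ∑ u, |p a u - p b u| = 0 :=
      le_antisymm hle (Finset.sum_nonneg fun u _ => abs_nonneg _)
    have hz : ∀ u, p a u = p b u := by
      intro u
      have h1 := (Finset.sum_eq_zero_iff_of_nonneg (fun u _ => abs_nonneg _)).mp h0 u
        (Finset.mem_univ u)
      have h2 := abs_eq_zero.mp h1
      linarith
    obtain ⟨kε, hk⟩ := h (1/2) (by norm_num)
    obtain ⟨g, hg0, hg1, hgood⟩ := hk kε le_rfl
    have hga := hgood a
    have hgb := hgood b
    have hprod : ∀ v : Fin kε → U, (∏ i, p b (v i)) = ∏ i, p a (v i) :=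
      fun v => Finset.prod_congr rfl fun i _ => (hz (v i)).symm
    simp_rw [hprod] at hgb
    have hsum : (∑ v : Fin kε → U, (∏ i, p a (v i)) * g v a)
        + ∑ v : Fin kε → U, (∏ i, p a (v i)) * g v b ≤ 1 := by
      rw [← Finset.sum_add_distrib]
      calc ∑ v : Fin kε → U, ((∏ i, p a (v i)) * g v a + (∏ i, p a (v i)) * g v b)
          ≤ ∑ v : Fin kε → U, (∏ i, p a (v i)) * 1 := by
            refine Finset.sum_le_sum fun v _ => ?_
            rw [← mul_add]
            refine mul_le_mul_of_nonneg_left ?_ (hw0 kε a v)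
            have hsub : g v a + g v b = ∑ x ∈ ({a, b} : Finset A), g v x :=
              (Finset.sum_pair hab).symm
            rw [hsub]
            calc ∑ x ∈ ({a, b} : Finset A), g v x ≤ ∑ x, g v x :=
                  Finset.sum_le_sum_of_subset_of_nonneg (Finset.subset_univ _)
                    (fun x _ _ => hg0 v x)
              _ = 1 := hg1 v
        _ = 1 := by simp_rw [mul_one]; exact hw1 kε a
    linarith
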